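/- Soundness of the transitive-closure acyclicity encoding: if a model M satisfies the clauses e_{i,j}∧t_{j,k}→t_{i,k} for all (v_i,v_j)∈E and v_k∈V, together with e_{i,j}→t_{i,j} for all edges, and e_{i,j}→¬t_{j,i} for all (v_i,v_j)∈E, then the graph G_M induced by the true edge variables is acyclic. -/

import Mathlib

/-- The vertex elimination sequence: `elimSeq E i` is the edge relation of the
graph `G_i` obtained from `G = G_0` by successively eliminating the vertices
`0, 1, ..., i-1` (the elimination ordering is the index order on `Fin n`).
Eliminating a vertex removes it and connects each of its in-neighbors to each
of its out-neighbors (no self-loops). -/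
def elimSeq {n : ℕ} (E : Fin n → Fin n → Prop) : ℕ → Fin n → Fin n → Prop
  | 0 => E
  | (i+1) => fun j k =>
      j.val ≠ i ∧ k.val ≠ i ∧
      (elimSeq E i j k ∨
        (j ≠ k ∧ ∃ m : Fin n, m.val = i ∧ elimSeq E i j m ∧ elimSeq E i m k))

/-- The vertex elimination graph `G*`: the union of all the `G_i`. -/
def estar {n : ℕ} (E : Fin n → Fin n → Prop) (j k : Fin n) : Prop :=
  ∃ i, elimSeq E i j k

/-- `tri E a b c` : the triangle recording that the edge `(a, c)` is created
while eliminating the (middle) vertex `b`. -/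
def tri {n : ℕ} (E : Fin n → Fin n → Prop) (a b c : Fin n) : Prop :=
  a ≠ c ∧ elimSeq E b.val a b ∧ elimSeq E b.val b c

/-- A directed graph is acyclic iff no vertex lies on a nonempty closed walk. -/
def Acyclic {n : ℕ} (E : Fin n → Fin n → Prop) : Prop :=
  ∀ v, ¬ Relation.TransGen E v v

/-- The graph `G_M` induced by a model `σ` via the edge variables `e`. -/
def modelGraph {n : ℕ} {Var : Type*} (E : Fin n → Fin n → Prop)
    (e : Fin n → Fin n → Var) (σ : Var → Prop) : Fin n → Fin n → Prop :=
  fun i j => E i j ∧ σ (e i j)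

/-- soundness of the transitive-closure acyclicity encoding. -/
theorem stmt16 {n : ℕ} {Var : Type*} (E : Fin n → Fin n → Prop)
    (e : Fin n → Fin n → Var) (σ : Var → Prop)
    (t' : Fin n → Fin n → Prop)
    (h1 : ∀ i j k, E i j → σ (e i j) → t' j k → t' i k)
    (h2 : ∀ i j, E i j → σ (e i j) → t' i j)
    (h3 : ∀ i j, E i j → σ (e i j) → ¬ t' j i) :
    Acyclic (modelGraph E e σ) := by
  have key : ∀ a b, Relation.TransGen (modelGraph E e σ) a b → t' a b := by
    intro a b h
    induction h using Relation.TransGen.head_induction_on with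
    | single h => exact h2 _ _ h.1 h.2
    | head h _ ih => exact h1 _ _ _ h.1 h.2 ih
  intro v hcyc
  cases hcyc with
  | single h => exact h3 _ _ h.1 h.2 (h2 _ _ h.1 h.2)
  | tail hvb h => exact h3 _ _ h.1 h.2 (key _ _ hvb)
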